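/- Let G be a diregular (2,k,+2)-digraph with k ≥ 3 and let u, v have a unique common out-neighbour. Then N²(u) ≠ N²(v), i.e. the sets of vertices at distance exactly 2 from u and from v are different. -/

import Mathlib

open scoped Classical

/-- There is a directed walk of length `n` from `u` to `v` in the digraph with
arc relation `A` (the walk is recorded as its list of `n+1` vertices). -/
def HasWalkLen {V : Type*} (A : V → V → Prop) (n : ℕ) (u v : V) : Prop :=
  ∃ l : List V, l.head? = some u ∧ l.getLast? = some v ∧ l.Chain' A ∧ l.length = n + 1

/-- The distance from `u` to `v` is at most `n`. -/
def DistLe {V : Type*} (A : V → V → Prop) (n : ℕ) (u v : V) : Prop :=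
  ∃ m ≤ n, HasWalkLen A m u v

/-- The distance from `u` to `v` is exactly `n`. -/
def DistEq {V : Type*} (A : V → V → Prop) (n : ℕ) (u v : V) : Prop :=
  HasWalkLen A n u v ∧ ∀ m < n, ¬ HasWalkLen A m u v

/-- A digraph is `k`-geodetic: between any ordered pair of vertices there is at
most one directed path of length at most `k`. -/
def Geodetic {V : Type*} (A : V → V → Prop) (k : ℕ) : Prop :=
  ∀ u v : V, ∀ l₁ l₂ : List V,
    (l₁.head? = some u ∧ l₁.getLast? = some v ∧ l₁.Chain' A ∧ l₁.length ≤ k + 1) →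
    (l₂.head? = some u ∧ l₂.getLast? = some v ∧ l₂.Chain' A ∧ l₂.length ≤ k + 1) →
    l₁ = l₂

/-- Out-neighbourhood. -/
def Nplus {V : Type*} (A : V → V → Prop) (u : V) : Set V := {v | A u v}

/-- Out-degree. -/
noncomputable def outDeg {V : Type*} (A : V → V → Prop) (u : V) : ℕ := {v | A u v}.ncard

/-- In-degree. -/
noncomputable def inDeg {V : Type*} (A : V → V → Prop) (u : V) : ℕ := {v | A v u}.ncard

/-- `T_k(u)`: the set of vertices at distance at most `k` from `u`. -/
def Tset {V : Type*} (A : V → V → Prop) (k : ℕ) (u : V) : Set V := {v | DistLe A k u v}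

/-- `O(u)`: the outliers of `u`, i.e. vertices at distance at least `k+1` from `u`. -/
def Outliers {V : Type*} (A : V → V → Prop) (k : ℕ) (u : V) : Set V := {v | ¬ DistLe A k u v}

section WalkAPI
variable {V : Type*} {A : V → V → Prop} {k m m' n : ℕ} {x y z y₁ y₂ : V}

lemma walk_nil (x : V) : HasWalkLen A 0 x x :=
  ⟨[x], rfl, rfl, List.isChain_singleton x, rfl⟩

lemma walk_zero_eq (h : HasWalkLen A 0 x y) : x = y := by
  obtain ⟨l, h1, h2, _, h4⟩ := h
  match l, h4 with
  | [a], _ =>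
    simp only [List.head?, List.getLast?] at h1 h2
    simp_all

lemma walk_one (h : A x y) : HasWalkLen A 1 x y :=
  ⟨[x, y], rfl, rfl, List.isChain_pair.mpr h, rfl⟩

lemma walk_one_arc (h : HasWalkLen A 1 x y) : A x y := by
  obtain ⟨l, h1, h2, h3, h4⟩ := h
  match l, h4 with
  | [a, b], _ =>
    simp only [List.head?] at h1
    have hb : b = y := by simpa using h2
    have := List.isChain_pair.mp h3
    simp_all

lemma walk_cons (h : A x y) (w : HasWalkLen A n y z) : HasWalkLen A (n + 1) x z := by
  obtain ⟨l, h1, h2, h3, h4⟩ := w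
  refine ⟨x :: l, rfl, ?_, ?_, by simp [h4]⟩
  · cases l with
    | nil => simp at h4
    | cons b t => rw [List.getLast?_cons_cons]; exact h2
  · show List.IsChain A (x :: l); rw [List.isChain_cons]
    exact ⟨fun w hw => by rw [h1] at hw; injection hw with h'; rw [← h']; exact h, h3⟩

lemma walk_uncons (w : HasWalkLen A (n + 1) x z) : ∃ y, A x y ∧ HasWalkLen A n y z := by
  obtain ⟨l, h1, h2, h3, h4⟩ := w
  match l, h4 with
  | a :: b :: t, h4 =>
    have hax : a = x := by simpa using h1
    refine ⟨b, ?_, ⟨b :: t, rfl, by simpa using h2, (List.isChain_cons_cons.mp h3).2, by simpa using h4⟩⟩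
    rw [← hax]; exact (List.isChain_cons_cons.mp h3).1

lemma walk_snoc (w : HasWalkLen A n x y) (h : A y z) : HasWalkLen A (n + 1) x z := by
  induction n generalizing x with
  | zero => rw [walk_zero_eq w]; exact walk_one h
  | succ n ih =>
    obtain ⟨p, hxp, wp⟩ := walk_uncons w
    exact walk_cons hxp (ih wp)

lemma walk_unsnoc (w : HasWalkLen A (n + 1) x z) : ∃ y, HasWalkLen A n x y ∧ A y z := by
  induction n generalizing x with
  | zero => exact ⟨x, walk_nil x, walk_one_arc w⟩
  | succ n ih =>
    obtain ⟨p, hxp, wp⟩ := walk_uncons w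
    obtain ⟨q, wq, hqz⟩ := ih wp
    exact ⟨q, walk_cons hxp wq, hqz⟩

private lemma cons_wl (h : A x y) {l : List V} (h1 : l.head? = some y)
    (h2 : l.getLast? = some z) (h3 : l.Chain' A) :
    (x :: l).head? = some x ∧ (x :: l).getLast? = some z ∧ (x :: l).Chain' A := by
  refine ⟨rfl, ?_, ?_⟩
  · cases l with
    | nil => simp at h1
    | cons b t => rw [List.getLast?_cons_cons]; exact h2
  · show List.IsChain A (x :: l); rw [List.isChain_cons]
    exact ⟨fun w hw => by rw [h1] at hw; injection hw with h'; rw [← h']; exact h, h3⟩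

lemma geo_len (hgeo : Geodetic A k) (hm : m ≤ k) (hm' : m' ≤ k)
    (w : HasWalkLen A m x y) (w' : HasWalkLen A m' x y) : m = m' := by
  obtain ⟨l, h1, h2, h3, h4⟩ := w
  obtain ⟨l', h1', h2', h3', h4'⟩ := w'
  have := hgeo x y l l' ⟨h1, h2, h3, by omega⟩ ⟨h1', h2', h3', by omega⟩
  subst this; omega

lemma geo_snd (hgeo : Geodetic A k) (hm : m + 1 ≤ k) (h1 : A x y₁) (h2 : A x y₂)
    (w1 : HasWalkLen A m y₁ z) (w2 : HasWalkLen A m y₂ z) : y₁ = y₂ := by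
  obtain ⟨l₁, e1, e2, e3, e4⟩ := w1
  obtain ⟨l₂, f1, f2, f3, f4⟩ := w2
  obtain ⟨g1, g2, g3⟩ := cons_wl h1 e1 e2 e3
  obtain ⟨g1', g2', g3'⟩ := cons_wl h2 f1 f2 f3
  have hll : (x :: l₁) = (x :: l₂) :=
    hgeo x z _ _ ⟨g1, g2, g3, by simp; omega⟩ ⟨g1', g2', g3', by simp; omega⟩
  have hl : l₁ = l₂ := by injection hll
  rw [hl] at e1
  rw [e1] at f1; injection f1

lemma geo_pen (hgeo : Geodetic A k) : ∀ {m : ℕ} {x y₁ y₂ z : V}, m + 1 ≤ k →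
    HasWalkLen A m x y₁ → HasWalkLen A m x y₂ → A y₁ z → A y₂ z → y₁ = y₂ := by
  intro m
  induction m with
  | zero =>
    intro x y₁ y₂ z _ w1 w2 _ _
    rw [← walk_zero_eq w1, ← walk_zero_eq w2]
  | succ m ih =>
    intro x y₁ y₂ z hm w1 w2 h1 h2
    obtain ⟨s₁, a1, v1⟩ := walk_uncons w1
    obtain ⟨s₂, a2, v2⟩ := walk_uncons w2
    have hss : s₁ = s₂ := geo_snd hgeo hm a1 a2 (walk_snoc v1 h1) (walk_snoc v2 h2)
    subst hss
    exact ih (by omega) v1 v2 h1 h2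

lemma set_pair {s : Set V} {x : V} (h : s.ncard = 2) (hx : x ∈ s) :
    ∃ y, y ≠ x ∧ ∀ z, z ∈ s ↔ z = x ∨ z = y := by
  obtain ⟨a, b, hab, rfl⟩ := Set.ncard_eq_two.mp h
  rcases hx with rfl | hx
  · exact ⟨b, fun hbx => hab hbx.symm, fun z => by simp [Set.mem_insert_iff]⟩
  · rcases hx with rfl
    exact ⟨a, fun hax => hab hax, fun z => by simp [Set.mem_insert_iff, or_comm]⟩

lemma set_pair2 {s : Set V} {c d : V} (h : s.ncard = 2) (hc : c ∈ s) (hd : d ∈ s)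
    (hcd : c ≠ d) : ∀ z, z ∈ s ↔ z = c ∨ z = d := by
  obtain ⟨y, hyx, hiff⟩ := set_pair h hc
  have hdy : d = y := by
    rcases (hiff d).mp hd with h' | h'
    · exact absurd h' hcd.symm
    · exact h'
  subst hdy; exact hiff

lemma sum_two_pow (n : ℕ) : ∑ i ∈ Finset.range n, 2 ^ i = 2 ^ n - 1 := by
  induction n with
  | zero => simp
  | succ n ih =>
    rw [Finset.sum_range_succ, ih]
    have h1 : 1 ≤ 2 ^ n := Nat.one_le_two_pow
    have h2 : 2 ^ (n + 1) = 2 * 2 ^ n := by ring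
    omega

lemma outlier_count [Fintype V]
    (hgeo : Geodetic A k) (hdeg : ∀ w : V, ({y | A w y} : Set V).ncard = 2)
    (hcard : Fintype.card V = 2 ^ (k + 1) + 1) (x : V) {c d : V} (hcd : c ≠ d)
    (hc : ¬ DistLe A k x c) (hd : ¬ DistLe A k x d) :
    ∀ e, ¬ DistLe A k x e → e = c ∨ e = d := by
  classical
  set R : ℕ → Finset V := fun i => Finset.univ.filter (fun y => HasWalkLen A i x y) with hR
  have hout : ∀ w : V, (Finset.univ.filter (fun y => A w y)).card = 2 := by
    intro w
    have h := hdeg w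
    rwa [Set.ncard_eq_toFinset_card', Set.toFinset_setOf] at h
  have hgrow : ∀ i, i + 1 ≤ k → 2 * (R i).card ≤ (R (i + 1)).card := by
    intro i hi
    have hdisj : ∀ w₁ ∈ R i, ∀ w₂ ∈ R i, w₁ ≠ w₂ →
        Disjoint (Finset.univ.filter (fun y => A w₁ y)) (Finset.univ.filter (fun y => A w₂ y)) := by
      intro w₁ hw₁ w₂ hw₂ hne
      rw [Finset.disjoint_left]
      intro y hy₁ hy₂
      simp only [hR, Finset.mem_filter, Finset.mem_univ, true_and] at hy₁ hy₂ hw₁ hw₂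
      exact hne (geo_pen hgeo hi hw₁ hw₂ hy₁ hy₂)
    have hsub : (R i).biUnion (fun w => Finset.univ.filter (fun y => A w y)) ⊆ R (i + 1) := by
      intro y hy
      simp only [hR, Finset.mem_biUnion, Finset.mem_filter, Finset.mem_univ, true_and] at hy ⊢
      obtain ⟨w, hw, hA⟩ := hy
      exact walk_snoc hw hA
    have hcalc : ((R i).biUnion (fun w => Finset.univ.filter (fun y => A w y))).card
        = 2 * (R i).card := by
      rw [Finset.card_biUnion hdisj]
      rw [Finset.sum_congr rfl (fun w _ => hout w), Finset.sum_const, smul_eq_mul, mul_comm]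
    calc 2 * (R i).card = _ := hcalc.symm
      _ ≤ (R (i + 1)).card := Finset.card_le_card hsub
  have hlow : ∀ i, i ≤ k → 2 ^ i ≤ (R i).card := by
    intro i
    induction i with
    | zero =>
      intro _
      have hx0 : x ∈ R 0 := by
        simp only [hR, Finset.mem_filter, Finset.mem_univ, true_and]; exact walk_nil x
      simpa using Finset.card_pos.mpr ⟨x, hx0⟩
    | succ i ih =>
      intro hi
      have h1 := ih (by omega)
      have h2 := hgrow i hi
      have h3 : 2 ^ (i + 1) = 2 * 2 ^ i := by ring
      omega
  have hdisj2 : ∀ i ∈ Finset.range (k + 1), ∀ j ∈ Finset.range (k + 1), i ≠ j →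
      Disjoint (R i) (R j) := by
    intro i hi j hj hne
    rw [Finset.disjoint_left]
    intro y hyi hyj
    simp only [Finset.mem_range] at hi hj
    simp only [hR, Finset.mem_filter, Finset.mem_univ, true_and] at hyi hyj
    exact hne (geo_len hgeo (by omega) (by omega) hyi hyj)
  have hUcard : 2 ^ (k + 1) - 1 ≤ ((Finset.range (k + 1)).biUnion R).card := by
    rw [Finset.card_biUnion hdisj2]
    calc 2 ^ (k + 1) - 1 = ∑ i ∈ Finset.range (k + 1), 2 ^ i := (sum_two_pow _).symm
      _ ≤ ∑ i ∈ Finset.range (k + 1), (R i).card :=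
        Finset.sum_le_sum (fun i hi => hlow i (by simp only [Finset.mem_range] at hi; omega))
  have hUsub : (Finset.range (k + 1)).biUnion R ⊆ Finset.univ.filter (fun y => DistLe A k x y) := by
    intro y hy
    simp only [hR, Finset.mem_biUnion, Finset.mem_range, Finset.mem_filter, Finset.mem_univ,
      true_and] at hy ⊢
    obtain ⟨i, hik, hw⟩ := hy
    exact ⟨i, by omega, hw⟩
  have htot := Finset.card_filter_add_card_filter_not
    (s := (Finset.univ : Finset V)) (p := fun y => DistLe A k x y)
  have hT : 2 ^ (k + 1) - 1 ≤ (Finset.univ.filter (fun y => DistLe A k x y)).card :=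
    le_trans hUcard (Finset.card_le_card hUsub)
  have hcu : (Finset.univ : Finset V).card = 2 ^ (k + 1) + 1 := by simpa using hcard
  have hp : 1 ≤ 2 ^ (k + 1) := Nat.one_le_two_pow
  have hOcard : (Finset.univ.filter (fun y => ¬ DistLe A k x y)).card ≤ 2 := by omega
  intro e he
  have hsub2 : ({c, d} : Finset V) ⊆ Finset.univ.filter (fun y => ¬ DistLe A k x y) := by
    intro z hz
    simp only [Finset.mem_insert, Finset.mem_singleton] at hz
    simp only [Finset.mem_filter, Finset.mem_univ, true_and]
    rcases hz with rfl | rfl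
    · exact hc
    · exact hd
  have hcd2 : ({c, d} : Finset V).card = 2 := by
    rw [Finset.card_insert_of_notMem (by simpa using hcd), Finset.card_singleton]
  have heq : ({c, d} : Finset V) = Finset.univ.filter (fun y => ¬ DistLe A k x y) :=
    Finset.eq_of_subset_of_card_le hsub2 (by omega)
  have he2 : e ∈ ({c, d} : Finset V) := by
    rw [heq]; simp only [Finset.mem_filter, Finset.mem_univ, true_and]; exact he
  simpa using he2

end WalkAPI

/-- In a diregular `(2,k,+2)`-digraph with `k ≥ 3` and `u, v` having unique
common out-neighbour `u₂`: `N²(u) ≠ N²(v)`. -/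
theorem stmt_17 {V : Type*} [Fintype V] (A : V → V → Prop) (k : ℕ) (hk : 3 ≤ k)
    (hgeo : Geodetic A k)
    (hdeg : ∀ w, outDeg A w = 2 ∧ inDeg A w = 2)
    (hcard : Fintype.card V = 2 ^ (k + 1) + 1)
    (u v u₁ u₂ v₁ : V) (huv : u ≠ v)
    (h12 : u₁ ≠ u₂) (hv2 : v₁ ≠ u₂) (h11 : u₁ ≠ v₁)
    (hu : Nplus A u = {u₁, u₂}) (hv : Nplus A v = {v₁, u₂}) :
    {w | DistEq A 2 u w} ≠ {w | DistEq A 2 v w} := by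
  intro hNN
  have hAu : ∀ y, A u y ↔ y = u₁ ∨ y = u₂ := by
    intro y
    have h := Set.ext_iff.mp hu y
    simpa [Nplus, Set.mem_insert_iff] using h
  have hAv : ∀ y, A v y ↔ y = v₁ ∨ y = u₂ := by
    intro y
    have h := Set.ext_iff.mp hv y
    simpa [Nplus, Set.mem_insert_iff] using h
  have Au1 : A u u₁ := (hAu u₁).mpr (Or.inl rfl)
  have Au2 : A u u₂ := (hAu u₂).mpr (Or.inr rfl)
  have Av1 : A v v₁ := (hAv v₁).mpr (Or.inl rfl)
  have Av2 : A v u₂ := (hAv u₂).mpr (Or.inr rfl)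
  have noSelf : ∀ (x : V) (m : ℕ), 1 ≤ m → m ≤ k → HasWalkLen A m x x → False := by
    intro x m h1 h2 w
    have := geo_len hgeo h2 (Nat.zero_le k) w (walk_nil x)
    omega
  have noLoop : ∀ x : V, ¬ A x x := fun x h => noSelf x 1 le_rfl (by omega) (walk_one h)
  have twoW : ∀ (x y : V) (m m' : ℕ), m ≠ m' → m ≤ k → m' ≤ k →
      HasWalkLen A m x y → HasWalkLen A m' x y → False := by
    intro x y m m' hne hm hm' w w'
    exact hne (geo_len hgeo hm hm' w w')
  have nA21 : ¬ A u₂ u₁ := fun h =>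
    twoW u u₁ 2 1 (by omega) (by omega) (by omega) (walk_cons Au2 (walk_one h)) (walk_one Au1)
  have nA2v1 : ¬ A u₂ v₁ := fun h =>
    twoW v v₁ 2 1 (by omega) (by omega) (by omega) (walk_cons Av2 (walk_one h)) (walk_one Av1)
  -- out-neighbours of u₁
  obtain ⟨c, d, hcd, hset1⟩ := Set.ncard_eq_two.mp (hdeg u₁).1
  have hNu1 : ∀ y, A u₁ y ↔ y = c ∨ y = d := by
    intro y
    have h := Set.ext_iff.mp hset1 y
    simpa [Set.mem_insert_iff] using h
  have Auc : A u₁ c := (hNu1 c).mpr (Or.inl rfl)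
  have Aud : A u₁ d := (hNu1 d).mpr (Or.inr rfl)
  have hcfacts : ∀ e, A u₁ e → e ≠ u ∧ e ≠ u₁ ∧ e ≠ u₂ := by
    intro e hA
    refine ⟨?_, ?_, ?_⟩
    · intro h
      rw [h] at hA
      exact noSelf u 2 (by omega) (by omega) (walk_cons Au1 (walk_one hA))
    · intro h
      rw [h] at hA
      exact noLoop u₁ hA
    · intro h
      rw [h] at hA
      exact twoW u u₂ 2 1 (by omega) (by omega) (by omega)
        (walk_cons Au1 (walk_one hA)) (walk_one Au2)
  -- transfer N² equality into arcs of v₁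
  have hv1arc : ∀ e, A u₁ e → A v₁ e := by
    intro e hA
    obtain ⟨heu, heu1, heu2⟩ := hcfacts e hA
    have hde : DistEq A 2 u e := by
      refine ⟨walk_cons Au1 (walk_one hA), ?_⟩
      intro m hm w
      interval_cases m
      · exact heu (walk_zero_eq w).symm
      · rcases (hAu e).mp (walk_one_arc w) with rfl | rfl
        · exact heu1 rfl
        · exact heu2 rfl
    have hde' : DistEq A 2 v e := by
      have h := Set.ext_iff.mp hNN e
      exact h.mp hde
    obtain ⟨w2, _⟩ := hde'
    obtain ⟨m', hvm', w1⟩ := walk_uncons w2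
    have hAm : A m' e := walk_one_arc w1
    rcases (hAv m').mp hvm' with rfl | rfl
    · exact hAm
    · exact absurd (geo_snd hgeo (by omega) Au1 Au2 (walk_one hA) (walk_one hAm)) h12
  have Av1c : A v₁ c := hv1arc c Auc
  have Av1d : A v₁ d := hv1arc d Aud
  have hNv1 : ∀ y, A v₁ y ↔ y = c ∨ y = d := set_pair2 (hdeg v₁).1 Av1c Av1d hcd
  -- in-neighbour characterisations
  have hIc : ∀ w, A w c ↔ w = u₁ ∨ w = v₁ := set_pair2 (hdeg c).2 Auc Av1c h11
  have hId : ∀ w, A w d ↔ w = u₁ ∨ w = v₁ := set_pair2 (hdeg d).2 Aud Av1d h11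
  have hI2 : ∀ w, A w u₂ ↔ w = u ∨ w = v := set_pair2 (hdeg u₂).2 Au2 Av2 huv
  -- c and d are outliers of u₂
  have hOut : ∀ e, (∀ w, A w e ↔ w = u₁ ∨ w = v₁) → e ≠ u₂ → ¬ DistLe A k u₂ e := by
    intro e hIe hne hDL
    obtain ⟨m, hm, w⟩ := hDL
    rcases Nat.eq_zero_or_pos m with rfl | hpos
    · exact hne (walk_zero_eq w).symm
    · obtain ⟨m', rfl⟩ : ∃ m', m = m' + 1 := ⟨m - 1, by omega⟩
      obtain ⟨p, wp, hpe⟩ := walk_unsnoc w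
      rcases (hIe p).mp hpe with h' | h'
      · rw [h'] at wp
        rcases Nat.eq_zero_or_pos m' with rfl | hp2
        · exact h12 (walk_zero_eq wp).symm
        · exact twoW u u₁ (m' + 1) 1 (by omega) (by omega) (by omega)
            (walk_cons Au2 wp) (walk_one Au1)
      · rw [h'] at wp
        rcases Nat.eq_zero_or_pos m' with rfl | hp2
        · exact hv2 (walk_zero_eq wp).symm
        · exact twoW v v₁ (m' + 1) 1 (by omega) (by omega) (by omega)
            (walk_cons Av2 wp) (walk_one Av1)
  have Oc : ¬ DistLe A k u₂ c := hOut c hIc (hcfacts c Auc).2.2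
  have Od : ¬ DistLe A k u₂ d := hOut d hId (hcfacts d Aud).2.2
  have hdeg' : ∀ w : V, ({y | A w y} : Set V).ncard = 2 := fun w => (hdeg w).1
  have OnlyCD := outlier_count hgeo hdeg' hcard u₂ hcd Oc Od
  -- out-neighbours of u₂
  obtain ⟨a, b, hab, hset2⟩ := Set.ncard_eq_two.mp (hdeg u₂).1
  have hNu2 : ∀ y, A u₂ y ↔ y = a ∨ y = b := by
    intro y
    have h := Set.ext_iff.mp hset2 y
    simpa [Set.mem_insert_iff] using h
  have Au2a : A u₂ a := (hNu2 a).mpr (Or.inl rfl)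
  have Au2b : A u₂ b := (hNu2 b).mpr (Or.inr rfl)
  have hau1 : a ≠ u₁ := fun h => nA21 (h ▸ Au2a)
  have hau2 : a ≠ u₂ := fun h => noLoop u₂ (h ▸ Au2a)
  have hav1 : a ≠ v₁ := fun h => nA2v1 (h ▸ Au2a)
  -- T : the second in-neighbour of a
  obtain ⟨T, hTu2, hIa⟩ := set_pair (hdeg a).2 (show u₂ ∈ {w | A w a} from Au2a)
  have ATa : A T a := (hIa T).mpr (Or.inr rfl)
  by_cases hTcd : T = c ∨ T = d
  · -- Case 1 : walks u→u₁→T→a and u→u₂→a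
    have hA1T : A u₁ T := (hNu1 T).mpr hTcd
    exact twoW u a 3 2 (by omega) hk (by omega)
      (walk_cons Au1 (walk_cons hA1T (walk_one ATa)))
      (walk_cons Au2 (walk_one Au2a))
  push_neg at hTcd
  have hDT : DistLe A k u₂ T := by
    by_contra h
    rcases OnlyCD T h with rfl | rfl
    · exact hTcd.1 rfl
    · exact hTcd.2 rfl
  obtain ⟨m, hm, wT⟩ := hDT
  have hm1 : 1 ≤ m := by
    rcases Nat.eq_zero_or_pos m with rfl | h
    · exact absurd (walk_zero_eq wT).symm hTu2
    · exact h
  have hmk : m = k := by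
    by_contra hne
    exact twoW u₂ a (m + 1) 1 (by omega) (by omega) (by omega)
      (walk_snoc wT ATa) (walk_one Au2a)
  rw [hmk] at wT
  have hkk : k - 1 + 1 = k := by omega
  rw [← hkk] at wT
  obtain ⟨s, hus, ws⟩ := walk_uncons wT
  rcases (hNu2 s).mp hus with h' | h'
  · -- s = a : closed walk a ⇝ T → a of length k
    rw [h'] at ws
    exact noSelf a k (by omega) le_rfl (by rw [← hkk]; exact walk_snoc ws ATa)
  · -- s = b
    rw [h'] at ws
    obtain ⟨g, hga, hNT⟩ := set_pair (hdeg T).1 (show a ∈ {y | A T y} from ATa)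
    have ATg : A T g := (hNT g).mpr (Or.inr rfl)
    by_cases hgT : g = T
    · exact noLoop T (hgT ▸ ATg)
    by_cases hgb : g = b
    · exact noSelf b k (by omega) le_rfl (by rw [← hkk]; exact walk_snoc ws (hgb ▸ ATg))
    by_cases hgu2 : g = u₂
    · have hATu2 : A T u₂ := hgu2 ▸ ATg
      rcases (hI2 T).mp hATu2 with rfl | rfl
      · rcases (hAu a).mp ATa with rfl | rfl
        · exact hau1 rfl
        · exact hau2 rfl
      · rcases (hAv a).mp ATa with rfl | rfl
        · exact hav1 rfl
        · exact hau2 rfl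
    by_cases hgcd : g = c ∨ g = d
    · have hT1 : T = u₁ ∨ T = v₁ := by
        rcases hgcd with rfl | rfl
        · exact (hIc T).mp ATg
        · exact (hId T).mp ATg
      have hacd : a = c ∨ a = d := by
        rcases hT1 with rfl | rfl
        · exact (hNu1 a).mp ATa
        · exact (hNv1 a).mp ATa
      have h2in : u₂ = u₁ ∨ u₂ = v₁ := by
        rcases hacd with rfl | rfl
        · exact (hIc u₂).mp Au2a
        · exact (hId u₂).mp Au2a
      rcases h2in with h' | h'
      · exact h12 h'.symm
      · exact hv2 h'.symm
    · push_neg at hgcd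
      have hDg : DistLe A k u₂ g := by
        by_contra h
        rcases OnlyCD g h with rfl | rfl
        · exact hgcd.1 rfl
        · exact hgcd.2 rfl
      obtain ⟨e, hek, wg⟩ := hDg
      have he0 : e ≠ 0 := by
        rintro rfl
        exact hgu2 (walk_zero_eq wg).symm
      have he1 : e ≠ 1 := by
        rintro rfl
        rcases (hNu2 g).mp (walk_one_arc wg) with rfl | rfl
        · exact hga rfl
        · exact hgb rfl
      have hee : e - 1 + 1 = e := by omega
      rw [← hee] at wg
      obtain ⟨s', hus', ws'⟩ := walk_uncons wg
      rcases (hNu2 s').mp hus' with h'' | h''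
      · -- s' = a : walks T→g of lengths e and 1
        rw [h''] at ws'
        exact twoW T g e 1 (by omega) (by omega) (by omega)
          (by rw [← hee]; exact walk_cons ATa ws') (walk_one ATg)
      · -- s' = b : walks b→g of lengths e-1 and k
        rw [h''] at ws'
        exact twoW b g (e - 1) k (by omega) (by omega) le_rfl ws'
          (by rw [← hkk]; exact walk_snoc ws ATg)
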